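/- Let ν_1, ..., ν_n be continuous, non-increasing functions on (0, ∞) with ν_i(x) → ∞ as x → 0+ and ν_i(x) → 0 as x → ∞, and let X_1, ..., X_n be independent random variables with distribution functions F_i(x) = exp{-ν_i(x)} for x > 0, F_i(0) = 0. Let x_n(y) = sup{x : Σ_{i=1}^n ν_i(x) ≥ y} be the generalized inverse of the function x ↦ Σ_{i=1}^n ν_i(x). Then for each i, p_{in} = P(X_i = max{X_1, ..., X_n}) = ∫_0^∞ ν_i(x_n(y)) e^{-y} dy. -/

import Mathlib

open MeasureTheory ProbabilityTheory Finset Filter Topology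
open scoped ENNReal

lemma lintegral_exp_tail (g : ℝ) :
    ∫⁻ y in Set.Ioi g, ENNReal.ofReal (Real.exp (-y)) = ENNReal.ofReal (Real.exp (-g)) := by
  have hint : IntegrableOn (fun y => Real.exp (-y)) (Set.Ioi g) := by
    simpa using exp_neg_integrableOn_Ioi g zero_lt_one
  rw [← ofReal_integral_eq_lintegral_ofReal hint
    (Filter.Eventually.of_forall fun y => (Real.exp_pos _).le), integral_exp_neg_Ioi]

lemma lintegral_y_exp :
    ∫⁻ y in Set.Ioi (0:ℝ), ENNReal.ofReal (y * Real.exp (-y)) = 1 := by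
  have hint : IntegrableOn (fun y : ℝ => Real.exp (-y) * y) (Set.Ioi 0) := by
    have := Real.GammaIntegral_convergent (s := 2) (by norm_num)
    simp only [show (2:ℝ) - 1 = 1 by norm_num, Real.rpow_one] at this
    exact this
  have hcongr : ∫⁻ y in Set.Ioi (0:ℝ), ENNReal.ofReal (y * Real.exp (-y))
      = ∫⁻ y in Set.Ioi (0:ℝ), ENNReal.ofReal (Real.exp (-y) * y) := by
    simp_rw [mul_comm]
  rw [hcongr, ← ofReal_integral_eq_lintegral_ofReal hint
    ((ae_restrict_iff' measurableSet_Ioi).2 (Filter.Eventually.of_forall fun y hy =>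
      mul_nonneg (Real.exp_pos _).le (le_of_lt hy)))]
  have hΓ : ∫ y in Set.Ioi (0:ℝ), Real.exp (-y) * y = Real.Gamma 2 := by
    rw [Real.Gamma_eq_integral (by norm_num : (0:ℝ) < 2)]
    refine setIntegral_congr_fun measurableSet_Ioi (fun y hy => ?_)
    rw [show (2:ℝ) - 1 = 1 by norm_num, Real.rpow_one]
  have h2 : Real.Gamma 2 = 1 := by
    rw [show (2:ℝ) = 1 + 1 by norm_num, Real.Gamma_add_one one_ne_zero, Real.Gamma_one, mul_one]
  rw [hΓ, h2, ENNReal.ofReal_one]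

lemma inv_spec {f : ℝ → ℝ} (hc : ContinuousOn f (Set.Ioi 0))
    (hm : ∀ x y, 0 < x → x ≤ y → f y ≤ f x)
    (h0 : Tendsto f (𝓝[>] (0:ℝ)) atTop) (hi : Tendsto f atTop (𝓝 0))
    {y : ℝ} (hy : 0 < y) :
    0 < sSup {x | 0 < x ∧ y ≤ f x} ∧ f (sSup {x | 0 < x ∧ y ≤ f x}) = y ∧
      ∀ x, 0 < x → (y ≤ f x ↔ x ≤ sSup {x | 0 < x ∧ y ≤ f x}) := by
  set T := {x | 0 < x ∧ y ≤ f x} with hT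
  obtain ⟨x₀, hx₀T⟩ : T.Nonempty := by
    obtain ⟨x₀, hx₀, hfx₀⟩ := ((h0.eventually (eventually_ge_atTop y)).and
      self_mem_nhdsWithin).exists
    exact ⟨x₀, hfx₀, hx₀⟩
  have hbdd : BddAbove T := by
    obtain ⟨M, hM⟩ := (hi.eventually_lt_const hy).exists_forall_of_atTop
    refine ⟨M, fun x hx => ?_⟩
    by_contra h
    exact absurd hx.2 (not_le.mpr (hM x (le_of_not_ge h)))
  set a := sSup T with ha
  have hx₀a : x₀ ≤ a := le_csSup hbdd hx₀T
  have hapos : 0 < a := lt_of_lt_of_le hx₀T.1 hx₀a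
  have hca : ContinuousAt f a :=
    hc.continuousAt (Ioi_mem_nhds hapos)
  have hfa_ge : y ≤ f a := by
    by_contra h
    push_neg at h
    obtain ⟨δ, hδ, hball⟩ := Metric.eventually_nhds_iff.mp (hca.eventually_lt_const h)
    obtain ⟨x, hxT, hxgt⟩ := exists_lt_of_lt_csSup ⟨x₀, hx₀T⟩ (by linarith : a - δ < a)
    have : |x - a| < δ := by
      rw [abs_lt]
      constructor <;> [linarith; linarith [le_csSup hbdd hxT]]
    exact absurd hxT.2 (not_le.mpr (hball this))
  have hfa_le : f a ≤ y := by
    by_contra h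
    push_neg at h
    obtain ⟨δ, hδ, hball⟩ := Metric.eventually_nhds_iff.mp (hca.eventually_const_lt h)
    have hx : (a + δ/2) ∈ T := by
      refine ⟨by linarith, le_of_lt (hball ?_)⟩
      rw [Real.dist_eq, show a + δ/2 - a = δ/2 by ring, abs_of_pos (by linarith)]
      linarith
    linarith [le_csSup hbdd hx]
  have hfa : f a = y := le_antisymm hfa_le hfa_ge
  exact ⟨hapos, hfa, fun x hx => ⟨fun h => le_csSup hbdd ⟨hx, h⟩,
    fun h => hfa ▸ hm x a hx h⟩⟩


theorem argmax_prob_basic_formula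
    {Ω : Type*} [MeasureSpace Ω] [IsProbabilityMeasure (ℙ : Measure Ω)]
    (n : ℕ) (hn : 0 < n) (X : Fin n → Ω → ℝ)
    (hXmeas : ∀ i, Measurable (X i))
    (hindep : iIndepFun X ℙ)
    (ν : Fin n → ℝ → ℝ)
    (hν_cont : ∀ i, ContinuousOn (ν i) (Set.Ioi 0))
    (hν_mono : ∀ i, ∀ x y, 0 < x → x ≤ y → ν i y ≤ ν i x)
    (hν_zero : ∀ i, Tendsto (ν i) (𝓝[>] (0 : ℝ)) atTop)
    (hν_infty : ∀ i, Tendsto (ν i) atTop (𝓝 0))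
    (hF : ∀ i x, 0 < x → (ℙ {ω | X i ω ≤ x}).toReal = Real.exp (-(ν i x)))
    (hF0 : ∀ i, ℙ {ω | X i ω ≤ 0} = 0) :
    ∀ i, (ℙ {ω | X i ω =
        Finset.univ.sup' (Finset.univ_nonempty_iff.mpr ⟨⟨0, hn⟩⟩) (fun j => X j ω)}).toReal
      = ∫ y in Set.Ioi (0 : ℝ),
          ν i (sSup {x : ℝ | 0 < x ∧ y ≤ ∑ j, ν j x}) * Real.exp (-y) := by
  classical
  intro i
  -- basic objects
  set μ : Fin n → Measure ℝ := fun j => Measure.map (X j) ℙ with hμdef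
  have hμprob : ∀ j, IsProbabilityMeasure (μ j) :=
    fun j => Measure.isProbabilityMeasure_map (hXmeas j).aemeasurable
  have hμIic : ∀ j x, 0 < x → μ j (Set.Iic x) = ENNReal.ofReal (Real.exp (-(ν j x))) := by
    intro j x hx
    have hmap : μ j (Set.Iic x) = ℙ {ω | X j ω ≤ x} := by
      rw [hμdef, Measure.map_apply (hXmeas j) measurableSet_Iic]; rfl
    have hfin : ℙ {ω | X j ω ≤ x} ≠ ⊤ := measure_ne_top _ _
    rw [hmap, ← ENNReal.ofReal_toReal hfin, hF j x hx]
  have hμIic0 : μ i (Set.Iic (0:ℝ)) = 0 := by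
    rw [hμdef, Measure.map_apply (hXmeas i) measurableSet_Iic]
    exact hF0 i
  have hν_nonneg : ∀ j x, 0 < x → 0 ≤ ν j x := by
    intro j x hx
    refine le_of_tendsto (hν_infty j) (eventually_atTop.2 ⟨x, fun t ht => ?_⟩)
    exact hν_mono j x t hx ht
  -- the sum functions
  set S : ℝ → ℝ := fun x => ∑ j, ν j x with hSdef
  set G : ℝ → ℝ := fun x => ∑ j ∈ Finset.univ.erase i, ν j x with hGdef
  have hSG : ∀ x, G x + ν i x = S x := by
    intro x
    exact Finset.sum_erase_add Finset.univ (fun j => ν j x) (Finset.mem_univ i)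
  have hS_cont : ContinuousOn S (Set.Ioi 0) :=
    continuousOn_finset_sum _ (fun j _ => hν_cont j)
  have hS_mono : ∀ x y, 0 < x → x ≤ y → S y ≤ S x := fun x y hx hxy =>
    Finset.sum_le_sum (fun j _ => hν_mono j x y hx hxy)
  have hS_zero : Tendsto S (𝓝[>] (0:ℝ)) atTop := by
    refine tendsto_atTop_mono' _ ?_ (hν_zero i)
    filter_upwards [self_mem_nhdsWithin] with x hx
    calc ν i x = ∑ j ∈ ({i} : Finset (Fin n)), ν j x := by simp
    _ ≤ S x := Finset.sum_le_sum_of_subset_of_nonneg (by simp)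
        (fun j _ _ => hν_nonneg j x hx)
  have hS_infty : Tendsto S atTop (𝓝 0) := by
    have := tendsto_finset_sum Finset.univ (fun j (_ : j ∈ Finset.univ) => hν_infty j)
    simpa using this
  set xn : ℝ → ℝ := fun y => sSup {x | 0 < x ∧ y ≤ S x} with hxndef
  have specS : ∀ y : ℝ, 0 < y → 0 < xn y ∧ S (xn y) = y ∧
      ∀ x, 0 < x → (y ≤ S x ↔ x ≤ xn y) :=
    fun y hy => inv_spec hS_cont hS_mono hS_zero hS_infty hy
  -- Step 1: independence
  have key1 : ℙ {ω | X i ω =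
        Finset.univ.sup' (Finset.univ_nonempty_iff.mpr ⟨⟨0, hn⟩⟩) (fun j => X j ω)}
      = ∫⁻ x, (∏ j ∈ Finset.univ.erase i, μ j (Set.Iic x)) ∂(μ i) := by
    set e : Finset (Fin n) := Finset.univ.erase i with hedef
    set W : Ω → (↥e → ℝ) := fun ω j => X (↑j) ω with hWdef
    have hWmeas : Measurable W := measurable_pi_lambda _ (fun j => hXmeas j)
    have hev : {ω | X i ω =
          Finset.univ.sup' (Finset.univ_nonempty_iff.mpr ⟨⟨0, hn⟩⟩) (fun j => X j ω)}
        = (fun ω => (X i ω, W ω)) ⁻¹' {p : ℝ × (↥e → ℝ) | ∀ j, p.2 j ≤ p.1} := by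
      ext ω
      simp only [Set.mem_setOf_eq, Set.mem_preimage]
      constructor
      · intro h j
        rw [h]
        exact Finset.le_sup' (fun j => X j ω) (Finset.mem_univ _)
      · intro h
        refine le_antisymm (Finset.le_sup' (fun j => X j ω) (Finset.mem_univ i))
          (Finset.sup'_le _ _ fun j _ => ?_)
        rcases eq_or_ne j i with rfl | hj
        · exact le_rfl
        · exact h ⟨j, Finset.mem_erase.2 ⟨hj, Finset.mem_univ j⟩⟩
    have hBmeas : MeasurableSet {p : ℝ × (↥e → ℝ) | ∀ j, p.2 j ≤ p.1} := by
      rw [Set.setOf_forall]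
      exact MeasurableSet.iInter fun j =>
        measurableSet_le (by fun_prop) (by fun_prop)
    have hIndep : IndepFun (X i) W ℙ := by
      have h1 := hindep.indepFun_finset {i} e
        (by simp [hedef]) hXmeas
      have h2 := h1.comp
        (φ := fun v : (↥({i} : Finset (Fin n)) → ℝ) => v ⟨i, Finset.mem_singleton_self i⟩)
        (ψ := id) (_mγ := inferInstance) (measurable_pi_apply _) measurable_id
      exact h2
    have hWlaw : Measure.map W ℙ = Measure.pi (fun j : ↥e => μ (↑j)) := by
      refine (Measure.pi_eq (fun s hs => ?_)).symm
      rw [Measure.map_apply hWmeas (MeasurableSet.univ_pi hs)]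
      set s' : Fin n → Set ℝ := fun j => if h : j ∈ e then s ⟨j, h⟩ else Set.univ with hs'def
      have hs'meas : ∀ j ∈ e, MeasurableSet (s' j) := fun j hj => by
        simp only [hs'def]; rw [dif_pos hj]; exact hs ⟨j, hj⟩
      have hpre : W ⁻¹' (Set.pi Set.univ s) = ⋂ j ∈ e, X j ⁻¹' s' j := by
        ext ω
        simp only [Set.mem_preimage, Set.mem_univ_pi, Set.mem_iInter]
        constructor
        · intro h j hj
          simpa only [hs'def, dif_pos hj] using h ⟨j, hj⟩
        · intro h j
          simpa only [hs'def, dif_pos j.2] using h (↑j) j.2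
      rw [hpre, hindep.measure_inter_preimage_eq_mul e hs'meas]
      calc ∏ j ∈ e, ℙ (X j ⁻¹' s' j) = ∏ j ∈ e, μ j (s' j) :=
            Finset.prod_congr rfl (fun j hj => by
              rw [hμdef]
              exact (Measure.map_apply (hXmeas j) (hs'meas j hj)).symm)
        _ = ∏ j : ↥e, μ (↑j) (s' ↑j) := (Finset.prod_coe_sort e (fun j => μ j (s' j))).symm
        _ = ∏ j : ↥e, μ (↑j) (s j) := Finset.prod_congr rfl (fun j _ => by
              simp only [hs'def]
              rw [dif_pos j.2])
    have hpair : Measure.map (fun ω => (X i ω, W ω)) ℙ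
        = (μ i).prod (Measure.pi fun j : ↥e => μ (↑j)) := by
      rw [← hWlaw]
      exact (indepFun_iff_map_prod_eq_prod_map_map (hXmeas i).aemeasurable
        hWmeas.aemeasurable).mp hIndep
    rw [hev, ← Measure.map_apply ((hXmeas i).prodMk hWmeas) hBmeas, hpair,
      Measure.prod_apply hBmeas]
    refine lintegral_congr (fun x => ?_)
    have hslice : (Prod.mk x ⁻¹' {p : ℝ × (↥e → ℝ) | ∀ j, p.2 j ≤ p.1})
        = Set.pi Set.univ (fun _ : ↥e => Set.Iic x) := by
      ext w
      simp only [Set.mem_preimage, Set.mem_setOf_eq, Set.mem_univ_pi, Set.mem_Iic]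
    rw [hslice, Measure.pi_pi]
    exact Finset.prod_coe_sort e (fun j => μ j (Set.Iic x))
  -- Step 2: restrict to positive reals
  have key2 : ℙ {ω | X i ω =
        Finset.univ.sup' (Finset.univ_nonempty_iff.mpr ⟨⟨0, hn⟩⟩) (fun j => X j ω)}
      = ∫⁻ x in Set.Ioi (0:ℝ), ENNReal.ofReal (Real.exp (-(G x))) ∂(μ i) := by
    rw [key1, ← lintegral_add_compl _ (measurableSet_Ioi (a := (0:ℝ)))]
    have h0 : ∫⁻ x in (Set.Ioi (0:ℝ))ᶜ,
        (∏ j ∈ Finset.univ.erase i, μ j (Set.Iic x)) ∂(μ i) = 0 := by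
      rw [Set.compl_Ioi]
      exact setLIntegral_measure_zero _ _ hμIic0
    rw [h0, add_zero]
    refine setLIntegral_congr_fun_ae measurableSet_Ioi
      (Filter.Eventually.of_forall fun x hx => ?_)
    rw [Finset.prod_congr rfl (fun j _ => hμIic j x hx),
      ← ENNReal.ofReal_prod_of_nonneg (fun j _ => (Real.exp_pos _).le)]
    congr 1
    rw [← Real.exp_sum]
    congr 1
    simp [hGdef]
  -- layer-cake + Tonelli
  have key3 : ℙ {ω | X i ω =
        Finset.univ.sup' (Finset.univ_nonempty_iff.mpr ⟨⟨0, hn⟩⟩) (fun j => X j ω)}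
      = ∫⁻ y in Set.Ioi (0:ℝ),
          ENNReal.ofReal (Real.exp (-y)) * μ i {x | 0 < x ∧ G x < y} := by
    have hG_cont : ContinuousOn G (Set.Ioi 0) := continuousOn_finset_sum _ (fun j _ => hν_cont j)
    have hUopen : IsOpen {p : ℝ × ℝ | 0 < p.1 ∧ G p.1 < p.2} := by
      rw [isOpen_iff_mem_nhds]
      rintro ⟨x, y⟩ ⟨hx, hxy⟩
      have hca : ContinuousAt G x := hG_cont.continuousAt (Ioi_mem_nhds hx)
      have hc : ContinuousAt (fun p : ℝ × ℝ => p.2 - G p.1) (x, y) :=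
        continuousAt_snd.sub (hca.comp (g := G) (f := Prod.fst) continuousAt_fst)
      have h1 : ∀ᶠ p : ℝ × ℝ in 𝓝 (x, y), 0 < p.2 - G p.1 :=
        hc.eventually (eventually_gt_nhds (sub_pos.mpr hxy))
      have h2 : ∀ᶠ p : ℝ × ℝ in 𝓝 (x, y), 0 < p.1 :=
        continuousAt_fst.eventually (eventually_gt_nhds hx)
      exact (h2.and h1).mono fun p hp => ⟨hp.1, sub_pos.mp hp.2⟩
    set U := {p : ℝ × ℝ | 0 < p.1 ∧ G p.1 < p.2} with hUdef
    have hUmeas : MeasurableSet U := hUopen.measurableSet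
    set g : ℝ × ℝ → ℝ≥0∞ := fun p => ENNReal.ofReal (Real.exp (-p.2)) with hgdef
    have hgmeas : Measurable (Set.indicator U g) := by
      refine Measurable.indicator ?_ hUmeas
      exact ENNReal.measurable_ofReal.comp (Real.continuous_exp.measurable.comp measurable_snd.neg)
    have hstep : ∀ x ∈ Set.Ioi (0:ℝ), ENNReal.ofReal (Real.exp (-(G x)))
        = ∫⁻ y in Set.Ioi (0:ℝ), Set.indicator U g (x, y) := by
      intro x hx
      have hGx : 0 ≤ G x := Finset.sum_nonneg fun j _ => hν_nonneg j x hx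
      have hind : ∀ y : ℝ, Set.indicator U g (x, y)
          = Set.indicator (Set.Ioi (G x)) (fun y => ENNReal.ofReal (Real.exp (-y))) y := by
        intro y
        by_cases h : G x < y
        · rw [Set.indicator_of_mem (s := U) (a := (x, y)) ⟨hx, h⟩ g,
            Set.indicator_of_mem (s := Set.Ioi (G x)) (a := y) h]
        · rw [Set.indicator_of_notMem (s := U) (a := (x, y)) (fun hc => h hc.2) g,
            Set.indicator_of_notMem (s := Set.Ioi (G x)) (a := y) h]
      simp_rw [hind]
      rw [lintegral_indicator measurableSet_Ioi, Measure.restrict_restrict measurableSet_Ioi,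
        Set.Ioi_inter_Ioi, sup_eq_left.mpr hGx, lintegral_exp_tail]
    rw [key2, setLIntegral_congr_fun_ae measurableSet_Ioi (Filter.Eventually.of_forall hstep),
      lintegral_lintegral_swap (f := fun x y => Set.indicator U g (x, y))
        ((hgmeas.comp (measurable_fst.prodMk measurable_snd)).aemeasurable)]
    refine setLIntegral_congr_fun_ae measurableSet_Ioi
      (Filter.Eventually.of_forall fun y hy => ?_)
    have hsec : ∀ x : ℝ, Set.indicator U g (x, y)
        = Set.indicator {x | 0 < x ∧ G x < y} (fun _ => ENNReal.ofReal (Real.exp (-y))) x := by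
      intro x
      by_cases h : (x, y) ∈ U
      · rw [Set.indicator_of_mem (s := U) (a := (x, y)) h g,
          Set.indicator_of_mem (s := {x | 0 < x ∧ G x < y}) (a := x) h]
      · rw [Set.indicator_of_notMem (s := U) (a := (x, y)) h g,
          Set.indicator_of_notMem (s := {x | 0 < x ∧ G x < y}) (a := x) (fun hc => h hc)]
    have hsecmeas : MeasurableSet {x : ℝ | 0 < x ∧ G x < y} := by
      have : {x : ℝ | 0 < x ∧ G x < y} = (fun x => (x, y)) ⁻¹' U := rfl
      rw [this]
      exact hUmeas.preimage (measurable_id.prodMk measurable_const)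
    simp_rw [hsec]
    rw [lintegral_indicator hsecmeas, setLIntegral_const, Measure.restrict_apply hsecmeas]
    have hss : {x : ℝ | 0 < x ∧ G x < y} ∩ Set.Ioi 0 = {x : ℝ | 0 < x ∧ G x < y} := by
      ext x
      simp only [Set.mem_inter_iff, Set.mem_setOf_eq, Set.mem_Ioi]
      exact ⟨fun h => h.1, fun h => ⟨h, h.1⟩⟩
    rw [hss]
  -- RHS machinery
  have h_xn_pos : ∀ y, 0 < y → 0 < xn y := fun y hy => (specS y hy).1
  have h_xn_anti : ∀ y1 y2, 0 < y1 → y1 ≤ y2 → xn y2 ≤ xn y1 := by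
    intro y1 y2 hy1 hy12
    have h2 := specS y2 (lt_of_lt_of_le hy1 hy12)
    have h1 := specS y1 hy1
    exact (h1.2.2 (xn y2) h2.1).mp (le_of_le_of_eq hy12 h2.2.1.symm)
  set m1 : ℝ → ℝ := fun y => if 0 < y then ν i (xn y) else 0 with hm1def
  have hm1mono : Monotone m1 := by
    intro y1 y2 h12
    by_cases h1 : 0 < y1
    · have h2 : 0 < y2 := lt_of_lt_of_le h1 h12
      simp only [hm1def, if_pos h1, if_pos h2]
      exact hν_mono i (xn y2) (xn y1) (h_xn_pos y2 h2) (h_xn_anti y1 y2 h1 h12)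
    · by_cases h2 : 0 < y2
      · simp only [hm1def, if_neg h1, if_pos h2]
        exact hν_nonneg i (xn y2) (h_xn_pos y2 h2)
      · simp only [hm1def, if_neg h1, if_neg h2]
        exact le_rfl
  have hm1meas : Measurable m1 := hm1mono.measurable
  have hm1nonneg : ∀ y, 0 ≤ m1 y := by
    intro y
    by_cases hy : 0 < y
    · simp only [hm1def, if_pos hy]
      exact hν_nonneg i (xn y) (h_xn_pos y hy)
    · simp only [hm1def, if_neg hy, le_refl]
  have hGxn : ∀ y, 0 < y → G (xn y) = y - ν i (xn y) := by
    intro y hy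
    have h1 := hSG (xn y)
    have h2 := (specS y hy).2.1
    linarith
  have hGxn_nonneg : ∀ y, 0 < y → 0 ≤ G (xn y) :=
    fun y hy => Finset.sum_nonneg fun j _ => hν_nonneg j _ (h_xn_pos y hy)
  set m2 : ℝ → ℝ := fun y => (if 0 < y then y else 0) - m1 y with hm2def
  have hm2meas : Measurable m2 := by
    refine Measurable.sub ?_ hm1meas
    exact Measurable.ite (measurableSet_lt measurable_const measurable_id)
      measurable_id measurable_const
  have hm2eq : ∀ y, 0 < y → m2 y = G (xn y) := by
    intro y hy
    simp only [hm2def, hm1def, if_pos hy]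
    rw [hGxn y hy]
  have hm2nonneg : ∀ y, 0 ≤ m2 y := by
    intro y
    by_cases hy : 0 < y
    · rw [hm2eq y hy]
      exact hGxn_nonneg y hy
    · simp [hm2def, hm1def, if_neg hy]
  have hm2le : ∀ y, 0 < y → m2 y ≤ y := by
    intro y hy
    rw [hm2eq y hy, hGxn y hy]
    have := hν_nonneg i (xn y) (h_xn_pos y hy)
    linarith
  have hexp_meas : Measurable fun y : ℝ => ENNReal.ofReal (Real.exp (-y)) :=
    ENNReal.measurable_ofReal.comp (Real.continuous_exp.measurable.comp measurable_neg)
  have hB_meas : Measurable fun y : ℝ =>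
      ENNReal.ofReal (Real.exp (-y)) * ENNReal.ofReal (m2 y) :=
    hexp_meas.mul (ENNReal.measurable_ofReal.comp hm2meas)
  have hB_le_A : (fun y => ENNReal.ofReal (Real.exp (-y)) * ENNReal.ofReal (m2 y))
      ≤ᵐ[volume.restrict (Set.Ioi (0:ℝ))] fun y => ENNReal.ofReal (y * Real.exp (-y)) := by
    refine (ae_restrict_iff' measurableSet_Ioi).2
      (Filter.Eventually.of_forall fun y hy => ?_)
    dsimp only
    rw [← ENNReal.ofReal_mul (Real.exp_pos _).le]
    refine ENNReal.ofReal_le_ofReal ?_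
    rw [mul_comm]
    exact mul_le_mul_of_nonneg_right (hm2le y hy) (Real.exp_pos _).le
  have hKb_le_one : ∫⁻ y in Set.Ioi (0:ℝ),
      ENNReal.ofReal (Real.exp (-y)) * ENNReal.ofReal (m2 y) ≤ 1 := by
    calc ∫⁻ y in Set.Ioi (0:ℝ), ENNReal.ofReal (Real.exp (-y)) * ENNReal.ofReal (m2 y)
        ≤ ∫⁻ y in Set.Ioi (0:ℝ), ENNReal.ofReal (y * Real.exp (-y)) := lintegral_mono_ae hB_le_A
      _ = 1 := lintegral_y_exp
  have hKb_ne_top : ∫⁻ y in Set.Ioi (0:ℝ),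
      ENNReal.ofReal (Real.exp (-y)) * ENNReal.ofReal (m2 y) ≠ ⊤ :=
    ne_top_of_le_ne_top ENNReal.one_ne_top hKb_le_one
  have hRlin : ∫⁻ y in Set.Ioi (0:ℝ), ENNReal.ofReal (m1 y * Real.exp (-y))
      = 1 - ∫⁻ y in Set.Ioi (0:ℝ), ENNReal.ofReal (Real.exp (-y)) * ENNReal.ofReal (m2 y) := by
    have hpoint : ∀ᵐ y ∂(volume : Measure ℝ), y ∈ Set.Ioi (0:ℝ) →
        ENNReal.ofReal (m1 y * Real.exp (-y))
        = ENNReal.ofReal (y * Real.exp (-y))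
          - ENNReal.ofReal (Real.exp (-y)) * ENNReal.ofReal (m2 y) := by
      refine Filter.Eventually.of_forall fun y hy => ?_
      have hy' : (0:ℝ) < y := hy
      rw [← ENNReal.ofReal_mul (Real.exp_pos (-y)).le,
        ← ENNReal.ofReal_sub _ (mul_nonneg (Real.exp_pos _).le (hm2nonneg y))]
      congr 1
      have hm1y : m1 y = ν i (xn y) := by simp only [hm1def, if_pos hy']
      rw [hm1y, hm2eq y hy', hGxn y hy']
      ring
    rw [setLIntegral_congr_fun_ae measurableSet_Ioi hpoint,
      lintegral_sub hB_meas hKb_ne_top hB_le_A, lintegral_y_exp]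
  have hRreal : (∫ y in Set.Ioi (0:ℝ),
      ν i (sSup {x : ℝ | 0 < x ∧ y ≤ ∑ j, ν j x}) * Real.exp (-y))
      = (∫⁻ y in Set.Ioi (0:ℝ), ENNReal.ofReal (m1 y * Real.exp (-y))).toReal := by
    rw [show (∫ y in Set.Ioi (0:ℝ),
        ν i (sSup {x : ℝ | 0 < x ∧ y ≤ ∑ j, ν j x}) * Real.exp (-y))
        = ∫ y in Set.Ioi (0:ℝ), m1 y * Real.exp (-y) from
      setIntegral_congr_fun measurableSet_Ioi (fun y hy => by
        have h1 : m1 y = ν i (xn y) := by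
          rw [hm1def]
          exact if_pos (hy : (0:ℝ) < y)
        rw [h1])]
    rw [integral_eq_lintegral_of_nonneg_ae
      (Filter.Eventually.of_forall fun y => mul_nonneg (hm1nonneg y) (Real.exp_pos _).le)
      (hm1meas.mul (Real.continuous_exp.measurable.comp measurable_neg)).aestronglyMeasurable]
  have hExpInt : ∫⁻ y in Set.Ioi (0:ℝ), ENNReal.ofReal (Real.exp (-y)) = 1 := by
    have := lintegral_exp_tail 0
    rwa [neg_zero, Real.exp_zero, ENNReal.ofReal_one] at this
  by_cases hone : Finset.univ.erase i = ∅
  · -- n = 1 case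
    have hG0 : ∀ x, G x = 0 := fun x => by rw [hGdef]; dsimp only; rw [hone]; simp
    have hμIoi : μ i (Set.Ioi (0:ℝ)) = 1 := by
      rw [← Set.compl_Iic, prob_compl_eq_one_sub measurableSet_Iic, hμIic0, tsub_zero]
    have hPE : ℙ {ω | X i ω =
        Finset.univ.sup' (Finset.univ_nonempty_iff.mpr ⟨⟨0, hn⟩⟩) (fun j => X j ω)} = 1 := by
      rw [key3]
      have hpt : ∀ y, y ∈ Set.Ioi (0:ℝ) →
          ENNReal.ofReal (Real.exp (-y)) * μ i {x | 0 < x ∧ G x < y}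
          = ENNReal.ofReal (Real.exp (-y)) := by
        intro y hy
        have hset : {x : ℝ | 0 < x ∧ G x < y} = Set.Ioi 0 := by
          ext x
          simp only [Set.mem_setOf_eq, Set.mem_Ioi, hG0]
          exact and_iff_left (hy : (0:ℝ) < y)
        rw [hset, hμIoi, mul_one]
      rw [setLIntegral_congr_fun_ae measurableSet_Ioi (Filter.Eventually.of_forall hpt), hExpInt]
    have hKb0 : ∫⁻ y in Set.Ioi (0:ℝ),
        ENNReal.ofReal (Real.exp (-y)) * ENNReal.ofReal (m2 y) = 0 := by
      have hpt : ∀ y, y ∈ Set.Ioi (0:ℝ) →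
          ENNReal.ofReal (Real.exp (-y)) * ENNReal.ofReal (m2 y) = 0 := by
        intro y hy
        rw [hm2eq y hy, hG0, ENNReal.ofReal_zero, mul_zero]
      rw [setLIntegral_congr_fun_ae measurableSet_Ioi (Filter.Eventually.of_forall hpt),
        lintegral_zero]
    rw [hPE, hRreal, hRlin, hKb0, tsub_zero]
  · -- n ≥ 2 case
    have hene : (Finset.univ.erase i).Nonempty := Finset.nonempty_of_ne_empty hone
    obtain ⟨j0, hj0⟩ := hene
    have hG_mono : ∀ x y, 0 < x → x ≤ y → G y ≤ G x := fun x y hx hxy =>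
      Finset.sum_le_sum fun j _ => hν_mono j x y hx hxy
    have hG_cont : ContinuousOn G (Set.Ioi 0) :=
      continuousOn_finset_sum _ (fun j _ => hν_cont j)
    have hG_zero : Tendsto G (𝓝[>] (0:ℝ)) atTop := by
      refine tendsto_atTop_mono' _ ?_ (hν_zero j0)
      filter_upwards [self_mem_nhdsWithin] with x hx
      calc ν j0 x = ∑ j ∈ ({j0} : Finset (Fin n)), ν j x := by simp
        _ ≤ G x := Finset.sum_le_sum_of_subset_of_nonneg (by simp [hj0])
            (fun j _ _ => hν_nonneg j x hx)
    have hG_infty : Tendsto G atTop (𝓝 0) := by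
      have h0 : (∑ _j ∈ Finset.univ.erase i, (0:ℝ)) = 0 := Finset.sum_const_zero
      rw [hGdef]
      rw [← h0]
      exact tendsto_finset_sum _ (fun j _ => hν_infty j)
    set a : ℝ → ℝ := fun u => sSup {x | 0 < x ∧ u ≤ G x} with hadef
    have specG : ∀ u, 0 < u → 0 < a u ∧ G (a u) = u ∧
        ∀ x, 0 < x → (u ≤ G x ↔ x ≤ a u) :=
      fun u hu => inv_spec hG_cont hG_mono hG_zero hG_infty hu
    have h_a_anti : ∀ u1 u2, 0 < u1 → u1 ≤ u2 → a u2 ≤ a u1 := by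
      intro u1 u2 hu1 hu12
      have h2 := specG u2 (lt_of_lt_of_le hu1 hu12)
      have h1 := specG u1 hu1
      exact (h1.2.2 (a u2) h2.1).mp (le_of_le_of_eq hu12 h2.2.1.symm)
    set m3 : ℝ → ℝ := fun u => if 0 < u then ν i (a u) else 0 with hm3def
    have hm3mono : Monotone m3 := by
      intro u1 u2 h12
      by_cases h1 : 0 < u1
      · have h2 : 0 < u2 := lt_of_lt_of_le h1 h12
        simp only [hm3def, if_pos h1, if_pos h2]
        exact hν_mono i (a u2) (a u1) (specG u2 h2).1 (h_a_anti u1 u2 h1 h12)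
      · by_cases h2 : 0 < u2
        · simp only [hm3def, if_neg h1, if_pos h2]
          exact hν_nonneg i (a u2) (specG u2 h2).1
        · simp only [hm3def, if_neg h1, if_neg h2]
          exact le_rfl
    have hm3meas : Measurable m3 := hm3mono.measurable
    have hm3nonneg : ∀ u, 0 ≤ m3 u := by
      intro u
      by_cases hu : 0 < u
      · simp only [hm3def, if_pos hu]
        exact hν_nonneg i (a u) (specG u hu).1
      · simp only [hm3def, if_neg hu, le_refl]
    -- the set {G < y} is the ray above the inverse point
    have hset2 : ∀ y, 0 < y → {x : ℝ | 0 < x ∧ G x < y} = Set.Ioi (a y) := by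
      intro y hy
      ext x
      simp only [Set.mem_setOf_eq, Set.mem_Ioi]
      constructor
      · rintro ⟨hx, hlt⟩
        by_contra hle
        push_neg at hle
        exact absurd (((specG y hy).2.2 x hx).mpr hle) (not_le.mpr hlt)
      · intro h
        have hx : 0 < x := lt_trans (specG y hy).1 h
        refine ⟨hx, ?_⟩
        by_contra hge
        push_neg at hge
        exact absurd (((specG y hy).2.2 x hx).mp hge) (not_le.mpr h)
    have hμIoi2 : ∀ y, 0 < y → μ i {x : ℝ | 0 < x ∧ G x < y}
        = 1 - ENNReal.ofReal (Real.exp (-(m3 y))) := by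
      intro y hy
      have hm3y : m3 y = ν i (a y) := by
        rw [hm3def]
        exact if_pos hy
      rw [hset2 y hy, ← Set.compl_Iic, prob_compl_eq_one_sub measurableSet_Iic,
        hμIic i (a y) (specG y hy).1, hm3y]
    have hBB_meas : Measurable fun y : ℝ =>
        ENNReal.ofReal (Real.exp (-y)) * ENNReal.ofReal (Real.exp (-(m3 y))) :=
      hexp_meas.mul (ENNReal.measurable_ofReal.comp
        (Real.continuous_exp.measurable.comp hm3meas.neg))
    have hBB_le : (fun y : ℝ => ENNReal.ofReal (Real.exp (-y))
          * ENNReal.ofReal (Real.exp (-(m3 y))))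
        ≤ᵐ[volume.restrict (Set.Ioi (0:ℝ))] fun y => ENNReal.ofReal (Real.exp (-y)) := by
      refine Filter.Eventually.of_forall fun y => ?_
      dsimp only
      calc ENNReal.ofReal (Real.exp (-y)) * ENNReal.ofReal (Real.exp (-(m3 y)))
          ≤ ENNReal.ofReal (Real.exp (-y)) * 1 := by
            refine mul_le_mul_right ?_ _
            rw [ENNReal.ofReal_le_one]
            exact Real.exp_le_one_iff.mpr (neg_nonpos.mpr (hm3nonneg y))
        _ = ENNReal.ofReal (Real.exp (-y)) := mul_one _
    have hBB_fin : ∫⁻ y in Set.Ioi (0:ℝ),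
        ENNReal.ofReal (Real.exp (-y)) * ENNReal.ofReal (Real.exp (-(m3 y))) ≠ ⊤ := by
      refine ne_top_of_le_ne_top ENNReal.one_ne_top ?_
      calc ∫⁻ y in Set.Ioi (0:ℝ), ENNReal.ofReal (Real.exp (-y))
            * ENNReal.ofReal (Real.exp (-(m3 y)))
          ≤ ∫⁻ y in Set.Ioi (0:ℝ), ENNReal.ofReal (Real.exp (-y)) := lintegral_mono_ae hBB_le
        _ = 1 := hExpInt
    have hPE : ℙ {ω | X i ω =
        Finset.univ.sup' (Finset.univ_nonempty_iff.mpr ⟨⟨0, hn⟩⟩) (fun j => X j ω)}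
        = 1 - ∫⁻ y in Set.Ioi (0:ℝ),
            ENNReal.ofReal (Real.exp (-y)) * ENNReal.ofReal (Real.exp (-(m3 y))) := by
      rw [key3]
      have hpt : ∀ y, y ∈ Set.Ioi (0:ℝ) →
          ENNReal.ofReal (Real.exp (-y)) * μ i {x | 0 < x ∧ G x < y}
          = ENNReal.ofReal (Real.exp (-y))
            - ENNReal.ofReal (Real.exp (-y)) * ENNReal.ofReal (Real.exp (-(m3 y))) := by
        intro y hy
        rw [hμIoi2 y hy, ENNReal.mul_sub (fun _ _ => ENNReal.ofReal_ne_top), mul_one]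
      rw [setLIntegral_congr_fun_ae measurableSet_Ioi (Filter.Eventually.of_forall hpt),
        lintegral_sub hBB_meas hBB_fin hBB_le, hExpInt]
    -- the region swap: Kb = K
    set ρ : Measure (ℝ × ℝ) :=
      (volume.restrict (Set.Ioi (0:ℝ))).prod (volume.restrict (Set.Ioi (0:ℝ))) with hρdef
    set S1 : Set (ℝ × ℝ) := {q | q.1 < m2 q.2} with hS1def
    set S2 : Set (ℝ × ℝ) := {q | q.1 + m3 q.1 < q.2} with hS2def
    have hS1meas : MeasurableSet S1 :=
      measurableSet_lt measurable_fst (hm2meas.comp measurable_snd)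
    have hS2meas : MeasurableSet S2 :=
      measurableSet_lt (measurable_fst.add (hm3meas.comp measurable_fst)) measurable_snd
    set gfun : ℝ × ℝ → ℝ≥0∞ := fun p => ENNReal.ofReal (Real.exp (-p.2)) with hgfdef
    have hgf_meas : Measurable gfun :=
      ENNReal.measurable_ofReal.comp (Real.continuous_exp.measurable.comp measurable_snd.neg)
    have hf1meas : Measurable (S1.indicator gfun) := hgf_meas.indicator hS1meas
    have hf2meas : Measurable (S2.indicator gfun) := hgf_meas.indicator hS2meas
    have hA : ∫⁻ p, S1.indicator gfun p ∂ρ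
        = ∫⁻ y in Set.Ioi (0:ℝ),
            ENNReal.ofReal (Real.exp (-y)) * ENNReal.ofReal (m2 y) := by
      rw [hρdef, lintegral_prod_symm _ hf1meas.aemeasurable]
      refine setLIntegral_congr_fun_ae measurableSet_Ioi
        (Filter.Eventually.of_forall fun y hy => ?_)
      have hind : ∀ u : ℝ, S1.indicator gfun (u, y)
          = Set.indicator (Set.Iio (m2 y)) (fun _ => ENNReal.ofReal (Real.exp (-y))) u := by
        intro u
        by_cases h : u < m2 y
        · rw [Set.indicator_of_mem (s := S1) (a := (u, y)) h gfun,
            Set.indicator_of_mem (s := Set.Iio (m2 y)) (a := u) h]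
        · rw [Set.indicator_of_notMem (s := S1) (a := (u, y)) h gfun,
            Set.indicator_of_notMem (s := Set.Iio (m2 y)) (a := u) h]
      simp_rw [hind]
      rw [lintegral_indicator measurableSet_Iio, setLIntegral_const,
        Measure.restrict_apply measurableSet_Iio, Set.Iio_inter_Ioi, Real.volume_Ioo, sub_zero]
    have hB : ∫⁻ p, S2.indicator gfun p ∂ρ
        = ∫⁻ u in Set.Ioi (0:ℝ),
            ENNReal.ofReal (Real.exp (-u)) * ENNReal.ofReal (Real.exp (-(m3 u))) := by
      rw [hρdef, lintegral_prod _ hf2meas.aemeasurable]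
      refine setLIntegral_congr_fun_ae measurableSet_Ioi
        (Filter.Eventually.of_forall fun u hu => ?_)
      have hc : (0:ℝ) ≤ u + m3 u :=
        le_of_lt (lt_of_lt_of_le (hu : (0:ℝ) < u) (le_add_of_nonneg_right (hm3nonneg u)))
      have hind : ∀ y : ℝ, S2.indicator gfun (u, y)
          = Set.indicator (Set.Ioi (u + m3 u)) (fun y => ENNReal.ofReal (Real.exp (-y))) y := by
        intro y
        by_cases h : u + m3 u < y
        · rw [Set.indicator_of_mem (s := S2) (a := (u, y)) h gfun,
            Set.indicator_of_mem (s := Set.Ioi (u + m3 u)) (a := y) h]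
        · rw [Set.indicator_of_notMem (s := S2) (a := (u, y)) h gfun,
            Set.indicator_of_notMem (s := Set.Ioi (u + m3 u)) (a := y) h]
      simp_rw [hind]
      rw [lintegral_indicator measurableSet_Ioi, Measure.restrict_restrict measurableSet_Ioi,
        Set.Ioi_inter_Ioi, sup_eq_left.mpr hc, lintegral_exp_tail, neg_add, Real.exp_add,
        ENNReal.ofReal_mul (Real.exp_pos _).le]
    have hD1 : ρ {q : ℝ × ℝ | q.1 = m2 q.2} = 0 := by
      have hmeasD1 : MeasurableSet {q : ℝ × ℝ | q.1 = m2 q.2} :=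
        measurableSet_eq_fun measurable_fst
          (show Measurable fun q : ℝ × ℝ => m2 q.2 from hm2meas.comp measurable_snd)
      rw [hρdef, Measure.prod_apply_symm hmeasD1]
      have hz : ∀ y : ℝ, (volume.restrict (Set.Ioi (0:ℝ)))
          ((fun u => (u, y)) ⁻¹' {q : ℝ × ℝ | q.1 = m2 q.2}) = 0 := by
        intro y
        have hpre : ((fun u => (u, y)) ⁻¹' {q : ℝ × ℝ | q.1 = m2 q.2}) = {m2 y} := by
          ext u
          simp [Set.mem_singleton_iff]
        rw [hpre, Measure.restrict_apply (measurableSet_singleton _)]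
        exact measure_mono_null Set.inter_subset_left (Real.volume_singleton)
      rw [lintegral_congr hz, lintegral_zero]
    have hD2 : ρ {q : ℝ × ℝ | q.2 = q.1 + m3 q.1} = 0 := by
      have hmeasD2 : MeasurableSet {q : ℝ × ℝ | q.2 = q.1 + m3 q.1} :=
        measurableSet_eq_fun measurable_snd
          (measurable_fst.add
            (show Measurable fun q : ℝ × ℝ => m3 q.1 from hm3meas.comp measurable_fst))
      rw [hρdef, Measure.prod_apply hmeasD2]
      have hz : ∀ u : ℝ, (volume.restrict (Set.Ioi (0:ℝ)))
          (Prod.mk u ⁻¹' {q : ℝ × ℝ | q.2 = q.1 + m3 q.1}) = 0 := by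
        intro u
        have hpre : (Prod.mk u ⁻¹' {q : ℝ × ℝ | q.2 = q.1 + m3 q.1}) = {u + m3 u} := by
          ext y
          simp [Set.mem_singleton_iff]
        rw [hpre, Measure.restrict_apply (measurableSet_singleton _)]
        exact measure_mono_null Set.inter_subset_left (Real.volume_singleton)
      rw [lintegral_congr hz, lintegral_zero]
    have haeeq : S1.indicator gfun =ᵐ[ρ] S2.indicator gfun := by
      have hD : ρ ({q : ℝ × ℝ | q.1 = m2 q.2} ∪ {q : ℝ × ℝ | q.2 = q.1 + m3 q.1}) = 0 :=
        measure_union_null hD1 hD2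
      have hbox : ∀ᵐ p ∂ρ, p ∈ Set.Ioi (0:ℝ) ×ˢ Set.Ioi (0:ℝ) := by
        rw [hρdef, Measure.prod_restrict]
        exact ae_restrict_mem (measurableSet_Ioi.prod measurableSet_Ioi)
      filter_upwards [hbox, measure_eq_zero_iff_ae_notMem.mp hD] with p hp hnp
      have hu : (0:ℝ) < p.1 := hp.1
      have hy : (0:ℝ) < p.2 := hp.2
      simp only [Set.mem_union, Set.mem_setOf_eq, not_or] at hnp
      obtain ⟨hne1, hne2⟩ := hnp
      have hm3u : m3 p.1 = ν i (a p.1) := by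
        rw [hm3def]
        exact if_pos hu
      have hiff : p ∈ S1 ↔ p ∈ S2 := by
        simp only [hS1def, hS2def, Set.mem_setOf_eq]
        constructor
        · intro h
          have hGxny : p.1 < G (xn p.2) := by rwa [← hm2eq p.2 hy]
          have hxny : 0 < xn p.2 := h_xn_pos p.2 hy
          have h1 : xn p.2 ≤ a p.1 := ((specG p.1 hu).2.2 (xn p.2) hxny).mp hGxny.le
          have h2 : S (a p.1) ≤ S (xn p.2) := hS_mono (xn p.2) (a p.1) hxny h1
          have h3 : S (a p.1) = p.1 + m3 p.1 := by
            rw [hm3u, ← hSG (a p.1), (specG p.1 hu).2.1]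
          have h4 : p.1 + m3 p.1 ≤ p.2 := by
            rw [← h3]
            calc S (a p.1) ≤ S (xn p.2) := h2
              _ = p.2 := (specS p.2 hy).2.1
          exact lt_of_le_of_ne h4 (fun hc => hne2 hc.symm)
        · intro h
          have h3 : S (a p.1) = p.1 + m3 p.1 := by
            rw [hm3u, ← hSG (a p.1), (specG p.1 hu).2.1]
          have h5 : S (a p.1) < p.2 := by rw [h3]; exact h
          have h6 : ¬ (a p.1 ≤ xn p.2) := by
            intro hc
            exact absurd (((specS p.2 hy).2.2 (a p.1) (specG p.1 hu).1).mpr hc)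
              (not_le.mpr h5)
          push_neg at h6
          have h7 : G (a p.1) ≤ G (xn p.2) :=
            hG_mono (xn p.2) (a p.1) (h_xn_pos p.2 hy) h6.le
          have h8 : p.1 ≤ m2 p.2 := by
            rw [hm2eq p.2 hy, ← (specG p.1 hu).2.1]
            exact h7
          exact lt_of_le_of_ne h8 hne1
      by_cases h : p ∈ S1
      · rw [Set.indicator_of_mem h gfun, Set.indicator_of_mem (hiff.mp h) gfun]
      · rw [Set.indicator_of_notMem h gfun,
          Set.indicator_of_notMem (fun hc => h (hiff.mpr hc)) gfun]
    have hKbK : (∫⁻ y in Set.Ioi (0:ℝ),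
          ENNReal.ofReal (Real.exp (-y)) * ENNReal.ofReal (m2 y))
        = ∫⁻ y in Set.Ioi (0:ℝ),
          ENNReal.ofReal (Real.exp (-y)) * ENNReal.ofReal (Real.exp (-(m3 y))) := by
      rw [← hA, ← hB]
      exact lintegral_congr_ae haeeq
    rw [hPE, hRreal, hRlin, hKbK]
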